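/- Let R be a commutative ring and ℒ ⊂ R((t))^n a lattice such that ℒ ⊕ t^{-1}R[t^{-1}]^n = R((t))^n as R-modules. Writing e_j = u_j + m_j with u_j ∈ ℒ and m_j ∈ t^{-1}R[t^{-1}]^n for the standard basis vectors e_j, the elements u_1, …, u_n form an R[[t]]-basis of ℒ. -/

import Mathlib

noncomputable section

variable (R : Type*) [CommRing R]

/-- The `R`-submodule-set `t⁻¹R[t⁻¹]^n ⊂ R⸨t⸩^n` of vectors all of whose coordinates
have vanishing coefficients in degrees `≥ 0`. -/
def negPart (n : ℕ) : Set (Fin n → LaurentSeries R) :=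
  {x | ∀ j : Fin n, ∀ m : ℤ, 0 ≤ m → (x j).coeff m = 0}

/-- The `j`-th standard basis vector of `R⸨t⸩^n`. -/
def stdVec (n : ℕ) (j : Fin n) : Fin n → LaurentSeries R :=
  fun l => if l = j then 1 else 0

variable {R}

/-- Coefficient extraction as an additive monoid hom. -/
def coeffHom (k : ℤ) : LaurentSeries R →+ R where
  toFun x := x.coeff k
  map_zero' := rfl
  map_add' _ _ := HahnSeries.coeff_add

@[simp] lemma coeffHom_apply (k : ℤ) (x : LaurentSeries R) : coeffHom k x = x.coeff k := rfl

lemma psmul_apply {n : ℕ} (f : PowerSeries R) (x : Fin n → LaurentSeries R) (j : Fin n) :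
    (f • x) j = HahnSeries.ofPowerSeries ℤ R f * x j := rfl

lemma single_one_mul_coeff {y : LaurentSeries R} {k : ℤ} :
    ((HahnSeries.single (1 : ℤ) (1 : R)) * y).coeff k = y.coeff (k - 1) := by
  have h := HahnSeries.coeff_single_mul_add (r := (1 : R)) (x := y) (a := k - 1) (b := (1 : ℤ))
  simpa using h

lemma psmul_sub {n : ℕ} (f : PowerSeries R) (x y : Fin n → LaurentSeries R) :
    f • (x - y) = f • x - f • y := by
  funext j
  rw [psmul_apply, Pi.sub_apply, mul_sub, Pi.sub_apply, psmul_apply, psmul_apply]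

lemma csmul_coeff {n : ℕ} (r : R) (x : Fin n → LaurentSeries R) (j : Fin n) (k : ℤ) :
    ((PowerSeries.C r • x) j).coeff k = r * (x j).coeff k := by
  rw [psmul_apply, HahnSeries.ofPowerSeries_C, HahnSeries.C_apply,
    HahnSeries.single_zero_mul_eq_smul, HahnSeries.coeff_smul, smul_eq_mul]

lemma negPart_zero' (n : ℕ) : (0 : Fin n → LaurentSeries R) ∈ negPart R n := by
  intro j m _
  simp

/-- Let `ℒ ⊂ R⸨t⸩^n` be a lattice (a finitely generated projective `R⟦t⟧`-submodule
spanning `R⸨t⸩^n`) such that `ℒ ⊕ t⁻¹R[t⁻¹]^n = R⸨t⸩^n` (every element is uniquely the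
sum of an element of `ℒ` and one of `t⁻¹R[t⁻¹]^n`).  Writing `e_j = u_j + m_j` with
`u_j ∈ ℒ`, `m_j ∈ t⁻¹R[t⁻¹]^n`, the `u_j` form an `R⟦t⟧`-basis of `ℒ`. -/
theorem stmt14 (n : ℕ)
    (ℒ : Submodule (PowerSeries R) (Fin n → LaurentSeries R))
    (hfg : ℒ.FG) (hproj : Module.Projective (PowerSeries R) ℒ)
    (hspan : Submodule.span (LaurentSeries R) (ℒ : Set (Fin n → LaurentSeries R)) = ⊤)
    (hdec : ∀ x : Fin n → LaurentSeries R,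
      ∃! u : Fin n → LaurentSeries R, u ∈ ℒ ∧ (x - u) ∈ negPart R n)
    (u : Fin n → Fin n → LaurentSeries R)
    (hu : ∀ j, u j ∈ ℒ ∧ (stdVec R n j - u j) ∈ negPart R n) :
    ∃ b : Module.Basis (Fin n) (PowerSeries R) ℒ, ∀ j, (b j : Fin n → LaurentSeries R) = u j := by
  classical
  -- ℒ ∩ negPart = 0
  have hcap : ∀ x, x ∈ ℒ → x ∈ negPart R n → x = 0 := by
    intro x hx hneg
    obtain ⟨w, hw, huniq⟩ := hdec x
    have h1 : x = w := huniq x ⟨hx, by rw [sub_self]; exact negPart_zero' n⟩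
    have h2 : (0 : Fin n → LaurentSeries R) = w :=
      huniq 0 ⟨ℒ.zero_mem, by rwa [sub_zero]⟩
    rw [h1, ← h2]
  set S := Submodule.span (PowerSeries R) (Set.range u) with hS
  -- Step 2: ℒ ≤ S ⊔ (X) • ℒ
  have hstep2 : ℒ ≤ S ⊔ (Ideal.span {(PowerSeries.X : PowerSeries R)}) • ℒ := by
    intro v hv
    set w : Fin n → LaurentSeries R := fun j => HahnSeries.single (-1 : ℤ) (1 : R) * v j
      with hwdef
    have hvw : v = (PowerSeries.X : PowerSeries R) • w := by
      funext j
      rw [psmul_apply, HahnSeries.ofPowerSeries_X, hwdef, ← mul_assoc,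
        HahnSeries.single_mul_single]
      norm_num [HahnSeries.single_zero_one]
    obtain ⟨u', ⟨hu'L, hu'N⟩, -⟩ := hdec w
    set m : Fin n → LaurentSeries R := v - (PowerSeries.X : PowerSeries R) • u' with hmdef
    have hmL : m ∈ ℒ := Submodule.sub_mem ℒ hv (Submodule.smul_mem ℒ _ hu'L)
    have hmeq : m = (PowerSeries.X : PowerSeries R) • (w - u') := by
      rw [hmdef, psmul_sub, ← hvw]
    have hmc : ∀ (j : Fin n) (k : ℤ), (1 : ℤ) ≤ k → (m j).coeff k = 0 := by
      intro j k hk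
      rw [hmeq, psmul_apply, HahnSeries.ofPowerSeries_X, single_one_mul_coeff]
      exact hu'N j (k - 1) (by omega)
    set d : Fin n → R := fun j => (m j).coeff 0 with hddef
    have hmd : ∀ (j : Fin n) (k : ℤ), (0 : ℤ) ≤ k →
        (m j).coeff k = if k = 0 then d j else 0 := by
      intro j k hk
      by_cases h : k = 0
      · subst h; rw [if_pos rfl]
      · rw [if_neg h]; exact hmc j k (by omega)
    have hz : m - ∑ j, PowerSeries.C (d j) • u j = 0 := by
      apply hcap _ (Submodule.sub_mem ℒ hmL
        (Submodule.sum_mem ℒ fun j _ => Submodule.smul_mem ℒ _ (hu j).1))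
      intro l k hk
      have hcoe : ∀ j : Fin n,
          ((PowerSeries.C (d j) • u j) l).coeff k = d j * (stdVec R n j l).coeff k := by
        intro j
        rw [csmul_coeff]
        congr 1
        have h2 := (hu j).2 l k hk
        rw [Pi.sub_apply, HahnSeries.coeff_sub, sub_eq_zero] at h2
        exact h2.symm
      have hsum : ((∑ j, PowerSeries.C (d j) • u j) l).coeff k
          = ∑ j, d j * (stdVec R n j l).coeff k := by
        rw [Finset.sum_apply]
        rw [show ((∑ j, (PowerSeries.C (d j) • u j) l).coeff k)
            = coeffHom k (∑ j, (PowerSeries.C (d j) • u j) l) from rfl]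
        rw [map_sum]
        exact Finset.sum_congr rfl fun j _ => hcoe j
      rw [Pi.sub_apply, HahnSeries.coeff_sub, hsum, hmd l k hk]
      have hsum2 : ∑ j, d j * (stdVec R n j l).coeff k = if k = 0 then d l else 0 := by
        rw [Finset.sum_eq_single l]
        · have h1 : stdVec R n l l = 1 := if_pos rfl
          rw [h1, HahnSeries.coeff_one]
          split_ifs <;> simp
        · intro j _ hj
          have h0 : stdVec R n j l = 0 := if_neg fun h => hj h.symm
          rw [h0, HahnSeries.coeff_zero, mul_zero]
        · intro h; exact absurd (Finset.mem_univ l) h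
      rw [hsum2, sub_self]
    have hmS : m ∈ S := by
      have hzz : m = ∑ j, PowerSeries.C (d j) • u j := by rwa [sub_eq_zero] at hz
      rw [hzz]
      exact Submodule.sum_mem _ fun j _ =>
        Submodule.smul_mem _ _ (Submodule.subset_span ⟨j, rfl⟩)
    refine Submodule.mem_sup.2 ⟨m, hmS, (PowerSeries.X : PowerSeries R) • u',
      Submodule.smul_mem_smul (Ideal.mem_span_singleton_self _) hu'L, ?_⟩
    rw [hmdef]; abel
  -- X lies in the Jacobson radical of R⟦X⟧
  have hXjac : Ideal.span {(PowerSeries.X : PowerSeries R)} ≤ Ideal.jacobson ⊥ := by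
    intro f hf
    rw [Ideal.mem_span_singleton] at hf
    obtain ⟨g, rfl⟩ := hf
    rw [Ideal.mem_jacobson_bot]
    intro y
    rw [PowerSeries.isUnit_iff_constantCoeff]
    simp
  -- Step 3: Nakayama gives ℒ = span of the uⱼ
  have hLS : ℒ ≤ S := Submodule.le_of_le_smul_of_le_jacobson_bot hfg hXjac hstep2
  have hmem : ∀ v ∈ ℒ, ∃ a : Fin n → PowerSeries R, ∑ j, a j • u j = v := by
    intro v hv
    exact (Submodule.mem_span_range_iff_exists_fun _).mp (hLS hv)
  -- Step 4: injectivity via surjective endomorphism of R⸨t⸩ⁿ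
  have hcoesmul : ∀ (f : PowerSeries R) (x : Fin n → LaurentSeries R),
      (HahnSeries.ofPowerSeries ℤ R f) • x = f • x := by
    intro f x
    funext j
    rw [Pi.smul_apply, smul_eq_mul, psmul_apply]
  let ψ : (Fin n → LaurentSeries R) →ₗ[LaurentSeries R] (Fin n → LaurentSeries R) :=
    Fintype.linearCombination (LaurentSeries R) u
  have hψapp : ∀ c, ψ c = ∑ j, c j • u j := fun c => rfl
  have hψsurj : Function.Surjective ψ := by
    rw [← LinearMap.range_eq_top, eq_top_iff, ← hspan, Submodule.span_le]
    intro v hv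
    obtain ⟨a, ha⟩ := hmem v hv
    refine ⟨fun j => HahnSeries.ofPowerSeries ℤ R (a j), ?_⟩
    rw [hψapp, ← ha]
    exact Finset.sum_congr rfl fun j _ => hcoesmul (a j) (u j)
  have hψinj : Function.Injective ψ :=
    OrzechProperty.injective_of_surjective_endomorphism ψ hψsurj
  -- Step 5: the linear equivalence and basis
  have hmemsum : ∀ a : Fin n → PowerSeries R, ∑ j, a j • u j ∈ ℒ :=
    fun a => Submodule.sum_mem ℒ fun j _ => Submodule.smul_mem ℒ _ (hu j).1
  let φ : (Fin n → PowerSeries R) →ₗ[PowerSeries R] ℒ :=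
    { toFun := fun a => ⟨∑ j, a j • u j, hmemsum a⟩
      map_add' := by
        intro a b
        apply Subtype.ext
        show ∑ x, ((a + b) x) • u x = ∑ j, a j • u j + ∑ j, b j • u j
        rw [← Finset.sum_add_distrib]
        refine Finset.sum_congr rfl fun x _ => ?_
        funext l
        rw [psmul_apply, Pi.add_apply, Pi.add_apply, map_add, add_mul,
          psmul_apply, psmul_apply]
      map_smul' := by
        intro c a
        apply Subtype.ext
        show ∑ x, ((c • a) x) • u x = c • ∑ j, a j • u j
        funext l
        rw [Finset.sum_apply, psmul_apply, Finset.sum_apply, Finset.mul_sum]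
        refine Finset.sum_congr rfl fun x _ => ?_
        rw [psmul_apply, psmul_apply, ← mul_assoc, ← map_mul]
        rfl }
  have hφapp : ∀ a, (φ a : Fin n → LaurentSeries R) = ∑ j, a j • u j := fun a => rfl
  have hφinj : Function.Injective φ := by
    intro a b hab
    have hab' : ∑ j, a j • u j = ∑ j, b j • u j := by
      have := congrArg Subtype.val hab
      simpa [hφapp] using this
    have hψeq : ψ (fun j => HahnSeries.ofPowerSeries ℤ R (a j))
        = ψ (fun j => HahnSeries.ofPowerSeries ℤ R (b j)) := by
      rw [hψapp, hψapp]
      calc ∑ j, (HahnSeries.ofPowerSeries ℤ R (a j)) • u j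
          = ∑ j, a j • u j := Finset.sum_congr rfl fun j _ => hcoesmul (a j) (u j)
        _ = ∑ j, b j • u j := hab'
        _ = ∑ j, (HahnSeries.ofPowerSeries ℤ R (b j)) • u j :=
            (Finset.sum_congr rfl fun j _ => hcoesmul (b j) (u j)).symm
    have := hψinj hψeq
    funext j
    exact HahnSeries.ofPowerSeries_injective (congrFun this j)
  have hφsurj : Function.Surjective φ := by
    rintro ⟨v, hv⟩
    obtain ⟨a, ha⟩ := hmem v hv
    exact ⟨a, Subtype.ext ha⟩
  let e := LinearEquiv.ofBijective φ ⟨hφinj, hφsurj⟩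
  refine ⟨(Pi.basisFun (PowerSeries R) (Fin n)).map e, ?_⟩
  intro j
  rw [Module.Basis.map_apply, Pi.basisFun_apply]
  show (φ (Pi.single j 1) : Fin n → LaurentSeries R) = u j
  rw [hφapp]
  rw [Finset.sum_eq_single j]
  · rw [Pi.single_eq_same]
    funext l
    rw [psmul_apply, map_one, one_mul]
  · intro k _ hk
    rw [Pi.single_eq_of_ne hk]
    funext l
    rw [psmul_apply, map_zero, zero_mul, Pi.zero_apply]
  · intro h; exact absurd (Finset.mem_univ j) h

end
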